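/- For every vector a = (a_1, …, a_n) ∈ ℝ^n with a_j > 0 for all j = 1, …, n, there exists a unique C ∈ ℝ^n such that F(C) = a. -/

import Mathlib

open MeasureTheory Set
open scoped Classical

/-- `f_j^{(C)}(t) = C_j - (t - x_j)^2`. -/
noncomputable def fj (n : ℕ) (x C : Fin n → ℝ) (j : Fin n) (t : ℝ) : ℝ :=
  C j - (t - x j) ^ 2

/-- `f^{(C)}(t) = max{f_1^{(C)}(t), …, f_n^{(C)}(t), 0}`. -/
noncomputable def fmax (n : ℕ) (x C : Fin n → ℝ) (t : ℝ) : ℝ :=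
  max (⨆ j : Fin n, fj n x C j t) 0

/-- `E_j^{(C)} = {t : f_j^{(C)}(t) = f^{(C)}(t)}`. -/
def Ej (n : ℕ) (x C : Fin n → ℝ) (j : Fin n) : Set ℝ :=
  {t | fj n x C j t = fmax n x C t}

/-- `F_j(C) = ∫_{E_j^{(C)}} f^{(C)}` if `E_j^{(C)} ≠ ∅`, else `0`. -/
noncomputable def Fj (n : ℕ) (x C : Fin n → ℝ) (j : Fin n) : ℝ :=
  if (Ej n x C j).Nonempty then ∫ t in Ej n x C j, fmax n x C t else 0

/-- `F(C) = (F_1(C), …, F_n(C))`. -/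
noncomputable def Fvec (n : ℕ) (x C : Fin n → ℝ) : Fin n → ℝ :=
  fun j => Fj n x C j

/-- `𝔾 = {C : F_j(C) > 0 for all j}`. -/
def Gset (n : ℕ) (x : Fin n → ℝ) : Set (Fin n → ℝ) :=
  {C | ∀ j, 0 < Fj n x C j}

/-- `γ_{ij}(C) = (C_i - C_j)/(2(x_j - x_i)) + (x_i + x_j)/2`. -/
noncomputable def gam (n : ℕ) (x C : Fin n → ℝ) (i j : Fin n) : ℝ :=
  (C i - C j) / (2 * (x j - x i)) + (x i + x j) / 2

section basic
variable {n : ℕ} {x C C' : Fin n → ℝ} {t : ℝ} {j : Fin n}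

lemma fmax_nonneg : 0 ≤ fmax n x C t := le_max_right _ _

lemma fj_le_fmax : fj n x C j t ≤ fmax n x C t :=
  le_trans (le_ciSup (f := fun i => fj n x C i t) (Set.finite_range _).bddAbove j) (le_max_left _ _)

lemma fmax_le [Nonempty (Fin n)] {b : ℝ} (h : ∀ j, fj n x C j t ≤ b) (hb : 0 ≤ b) :
    fmax n x C t ≤ b := max_le (ciSup_le h) hb

/-- the sup is attained -/
lemma exists_fmax_eq [Nonempty (Fin n)] (C : Fin n → ℝ) (t : ℝ) :
    fmax n x C t = 0 ∨ ∃ j, fmax n x C t = fj n x C j t := by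
  obtain ⟨j, hj⟩ := Finite.exists_max (fun j => fj n x C j t)
  rcases le_or_gt (fj n x C j t) 0 with h | h
  · left
    have : (⨆ i : Fin n, fj n x C i t) ≤ 0 := ciSup_le fun i => le_trans (hj i) h
    simp [fmax, max_eq_right this]
  · right
    refine ⟨j, ?_⟩
    have h1 : (⨆ i : Fin n, fj n x C i t) = fj n x C j t :=
      le_antisymm (ciSup_le hj) (le_ciSup (f := fun i => fj n x C i t) (Set.finite_range _).bddAbove j)
    simp [fmax, h1, max_eq_left h.le]

lemma exists_fj_eq_of_pos [Nonempty (Fin n)] (h : 0 < fmax n x C t) :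
    ∃ j, fj n x C j t = fmax n x C t := by
  rcases exists_fmax_eq C t (x := x) with h0 | ⟨j, hj⟩
  · exact absurd h0 (by linarith)
  · exact ⟨j, hj.symm⟩

/-- monotone/Lipschitz in C -/
lemma fmax_le_fmax_add [Nonempty (Fin n)] {δ : ℝ} (hδ : 0 ≤ δ)
    (h : ∀ j, C' j ≤ C j + δ) : fmax n x C' t ≤ fmax n x C t + δ := by
  refine fmax_le (fun i => ?_) (by linarith [fmax_nonneg (n := n) (x := x) (C := C) (t := t)])
  have := fj_le_fmax (n := n) (x := x) (C := C) (t := t) (j := i)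
  simp only [fj] at *
  have := h i
  linarith

lemma fmax_mono [Nonempty (Fin n)] (h : ∀ j, C' j ≤ C j) : fmax n x C' t ≤ fmax n x C t := by
  have := fmax_le_fmax_add (n := n) (x := x) (C := C) (C' := C') (t := t) (δ := 0) le_rfl
    (fun j => by linarith [h j])
  linarith

end basic

section topo
variable {n : ℕ} {x C C' : Fin n → ℝ} {t : ℝ} {j : Fin n}

lemma continuous_fj : Continuous (fj n x C j) := by
  unfold fj; fun_prop

lemma continuous_fmax [Nonempty (Fin n)] : Continuous (fmax n x C) := by
  have h1 : ∀ t : ℝ, (⨆ i : Fin n, fj n x C i t) =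
      Finset.univ.sup' Finset.univ_nonempty (fun i => fj n x C i t) := by
    intro t
    refine le_antisymm (ciSup_le fun i => Finset.le_sup' (fun i => fj n x C i t) (Finset.mem_univ i)) ?_
    exact Finset.sup'_le _ _ fun i _ =>
      le_ciSup (f := fun i => fj n x C i t) (Set.finite_range _).bddAbove i
  have h2 : Continuous fun t => Finset.univ.sup' (Finset.univ_nonempty (α := Fin n))
      (fun i => fj n x C i t) := by
    apply Finset.Nonempty.cons_induction
      (motive := fun s hs => Continuous fun t => s.sup' hs (fun i => fj n x C i t))
    · intro i
      exact continuous_fj (n := n) (x := x) (C := C) (j := i)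
    · intro i s his hs ih
      simp only [Finset.sup'_cons hs]
      exact (continuous_fj (n := n) (x := x) (C := C) (j := i)).max ih
  have : Continuous fun t => max (Finset.univ.sup' (Finset.univ_nonempty (α := Fin n))
      (fun i => fj n x C i t)) 0 := h2.max continuous_const
  rw [show fmax n x C = fun t => max (⨆ i : Fin n, fj n x C i t) 0 from rfl]
  simpa only [← h1] using this

/-- support bound -/
lemma fmax_eq_zero_outside [Nonempty (Fin n)]
    (h : t ∉ ⋃ i : Fin n, Metric.closedBall (x i) (Real.sqrt (max (C i) 0))) :
    fmax n x C t = 0 := by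
  simp only [Set.mem_iUnion, Metric.mem_closedBall, Real.dist_eq, not_exists, not_le] at h
  rcases exists_fmax_eq C t (x := x) with h0 | ⟨i, hi⟩
  · exact h0
  · exfalso
    have hpos := fmax_nonneg (n := n) (x := x) (C := C) (t := t)
    have h2 : 0 ≤ fj n x C i t := hi ▸ hpos
    simp only [fj, sub_nonneg] at h2
    have h3 : (t - x i) ^ 2 ≤ max (C i) 0 := le_trans h2 (le_max_left _ _)
    have h4 : |t - x i| ≤ Real.sqrt (max (C i) 0) := by
      rw [← Real.sqrt_sq_eq_abs]
      exact Real.sqrt_le_sqrt h3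
    exact absurd h4 (not_le.mpr (h i))

lemma hasCompactSupport_fmax [Nonempty (Fin n)] : HasCompactSupport (fmax n x C) := by
  refine HasCompactSupport.intro (K := ⋃ i : Fin n, Metric.closedBall (x i)
    (Real.sqrt (max (C i) 0))) ?_ (fun t ht => fmax_eq_zero_outside ht)
  exact isCompact_iUnion fun i => isCompact_closedBall _ _

lemma integrable_fmax [Nonempty (Fin n)] : Integrable (fmax n x C) :=
  continuous_fmax.integrable_of_hasCompactSupport hasCompactSupport_fmax

lemma integrable_fmax_sq [Nonempty (Fin n)] :
    Integrable (fun t => (fmax n x C t) ^ 2 / 2) := by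
  apply Continuous.integrable_of_hasCompactSupport
  · exact ((continuous_fmax (n := n) (x := x) (C := C)).pow 2).div_const 2
  · apply HasCompactSupport.intro (K := ⋃ i : Fin n, Metric.closedBall (x i)
      (Real.sqrt (max (C i) 0))) (isCompact_iUnion fun i => isCompact_closedBall _ _)
    intro t ht
    rw [fmax_eq_zero_outside ht]
    norm_num

lemma measurableSet_Ej [Nonempty (Fin n)] : MeasurableSet (Ej n x C j) :=
  (isClosed_eq continuous_fj continuous_fmax).measurableSet

lemma Fj_eq_integral : Fj n x C j = ∫ t in Ej n x C j, fmax n x C t := by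
  unfold Fj
  split_ifs with h
  · rfl
  · rw [Set.not_nonempty_iff_eq_empty.mp h]
    simp

end topo

section keylemmas
variable {n : ℕ} {x C C' : Fin n → ℝ} {t : ℝ} {i j : Fin n}

/-- helper (L): decomposition of fmax after updating one coordinate -/
lemma fmax_update_eq [Nonempty (Fin n)] {s s' : ℝ} (hss : s' ≤ s) :
    fmax n x (Function.update C j s) t
      = max (s - (t - x j) ^ 2) (fmax n x (Function.update C j s') t) := by
  refine le_antisymm ?_ ?_
  · refine fmax_le (fun i => ?_) ?_
    · by_cases hij : i = j
      · subst hij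
        simp only [fj, Function.update_self]
        exact le_max_left _ _
      · have h1 : fj n x (Function.update C j s) i t = fj n x (Function.update C j s') i t := by
          simp [fj, Function.update_of_ne hij]
        rw [h1]
        exact le_trans fj_le_fmax (le_max_right _ _)
    · exact le_trans fmax_nonneg (le_max_right _ _)
  · refine max_le ?_ ?_
    · have := fj_le_fmax (n := n) (x := x) (C := Function.update C j s) (t := t) (j := j)
      simpa [fj, Function.update_self] using this
    · refine fmax_mono (fun i => ?_)
      by_cases hij : i = j
      · subst hij; simpa using hss
      · simp [Function.update_of_ne hij]

lemma continuous_finset_sup' [Nonempty (Fin n)] (S : Finset (Fin n)) (hS : S.Nonempty) :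
    Continuous fun t => S.sup' hS (fun i => fj n x C i t) := by
  apply Finset.Nonempty.cons_induction
    (motive := fun s hs => Continuous fun t => s.sup' hs (fun i => fj n x C i t))
  · intro i
    exact continuous_fj (n := n) (x := x) (C := C) (j := i)
  · intro i s his hs ih
    simp only [Finset.sup'_cons hs]
    exact (continuous_fj (n := n) (x := x) (C := C) (j := i)).max ih

/-- the set where two distinct parabolas agree is null -/
lemma tie_null (hxij : x i ≠ x j) : volume {t : ℝ | fj n x C i t = fj n x C j t} = 0 := by
  apply Set.Subsingleton.measure_zero
  intro t ht t' ht'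
  simp only [Set.mem_setOf_eq, fj] at ht ht'
  have h1 : 2 * t * (x j - x i) = 2 * t' * (x j - x i) := by nlinarith
  have h2 : x j - x i ≠ 0 := sub_ne_zero.mpr hxij.symm
  have := mul_right_cancel₀ h2 h1
  linarith

/-- the zero set of one parabola is null -/
lemma zero_null : volume {t : ℝ | fj n x C j t = 0} = 0 := by
  have hsub : {t : ℝ | fj n x C j t = 0} ⊆
      {x j - Real.sqrt (C j), x j + Real.sqrt (C j)} := by
    intro t ht
    simp only [Set.mem_setOf_eq, fj, sub_eq_zero] at ht
    have h0 : 0 ≤ C j := ht ▸ sq_nonneg _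
    have h1 : |t - x j| = Real.sqrt (C j) := by
      rw [← Real.sqrt_sq_eq_abs, ht]
    rcases abs_eq (Real.sqrt_nonneg (C j)) |>.mp h1 with h | h
    · have ht2 : t = x j + Real.sqrt (C j) := by linarith
      simp [ht2]
    · have ht2 : t = x j - Real.sqrt (C j) := by linarith
      simp [ht2]
  exact measure_mono_null hsub (Set.Countable.measure_zero
    ((Set.countable_singleton _).insert _) _)

/-- global tie set -/
lemma ties_null (hx : StrictMono x) :
    volume (⋃ i : Fin n, ⋃ k : Fin n, {t : ℝ | i ≠ k ∧ fj n x C i t = fj n x C k t}) = 0 := by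
  refine measure_iUnion_null fun i => measure_iUnion_null fun k => ?_
  by_cases hik : i = k
  · subst hik
    have : {t : ℝ | i ≠ i ∧ fj n x C i t = fj n x C i t} = ∅ := by
      ext t; simp
    simp [this]
  · refine measure_mono_null (fun t ht => ht.2) (tie_null (hx.injective.ne hik))

end keylemmas

section sumformula
variable {n : ℕ} {x C : Fin n → ℝ} {t : ℝ} {i j : Fin n}

lemma measurableSet_AS [Nonempty (Fin n)] (S : Finset (Fin n)) (hS : S.Nonempty) :
    MeasurableSet {t : ℝ | S.sup' hS (fun i => fj n x C i t) = fmax n x C t} :=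
  (isClosed_eq (continuous_finset_sup' S hS) continuous_fmax).measurableSet

lemma sum_Fj_eq [Nonempty (Fin n)] (hx : StrictMono x) (S : Finset (Fin n)) (hS : S.Nonempty) :
    ∑ j ∈ S, Fj n x C j
      = ∫ t in {t : ℝ | S.sup' hS (fun i => fj n x C i t) = fmax n x C t}, fmax n x C t := by
  have hint : Integrable (fmax n x C) := integrable_fmax
  calc ∑ j ∈ S, Fj n x C j
      = ∑ j ∈ S, ∫ t, (Ej n x C j).indicator (fmax n x C) t := by
        refine Finset.sum_congr rfl fun j _ => ?_
        rw [Fj_eq_integral, integral_indicator measurableSet_Ej]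
    _ = ∫ t, ∑ j ∈ S, (Ej n x C j).indicator (fmax n x C) t := by
        rw [integral_finset_sum]
        exact fun j _ => hint.indicator measurableSet_Ej
    _ = ∫ t, ({t : ℝ | S.sup' hS (fun i => fj n x C i t) = fmax n x C t}).indicator
          (fmax n x C) t := by
        refine integral_congr_ae ?_
        have hz := ties_null (n := n) (C := C) hx
        filter_upwards [(measure_eq_zero_iff_ae_notMem).mp hz] with t ht
        simp only [Set.mem_iUnion, not_exists, Set.mem_setOf_eq, not_and] at ht
        by_cases h0 : fmax n x C t = 0
        · have hL : ∀ j, (Ej n x C j).indicator (fmax n x C) t = 0 := by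
            intro j
            by_cases hmem : t ∈ Ej n x C j
            · rw [Set.indicator_of_mem hmem, h0]
            · rw [Set.indicator_of_notMem hmem]
          rw [Finset.sum_eq_zero (fun j _ => hL j)]
          by_cases hmem : t ∈ {t : ℝ | S.sup' hS (fun i => fj n x C i t) = fmax n x C t}
          · rw [Set.indicator_of_mem hmem, h0]
          · rw [Set.indicator_of_notMem hmem]
        · have hpos : 0 < fmax n x C t := lt_of_le_of_ne fmax_nonneg (Ne.symm h0)
          obtain ⟨j', hj'⟩ := exists_fj_eq_of_pos (x := x) hpos
          have huniq : ∀ i, t ∈ Ej n x C i ↔ i = j' := by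
            intro i
            constructor
            · intro hi
              by_contra hne
              exact (ht i j' hne) (by rw [hi.out, hj'])
            · intro h; subst h; exact hj'
          have hL : ∀ j, (Ej n x C j).indicator (fmax n x C) t
              = if j = j' then fmax n x C t else 0 := by
            intro j
            by_cases hmem : t ∈ Ej n x C j
            · rw [Set.indicator_of_mem hmem, if_pos ((huniq j).mp hmem)]
            · rw [Set.indicator_of_notMem hmem, if_neg (fun h => hmem ((huniq j).mpr h))]
          rw [Finset.sum_congr rfl (fun j _ => hL j), Finset.sum_ite_eq' S j' (fun _ => fmax n x C t)]
          have hAS : t ∈ {t : ℝ | S.sup' hS (fun i => fj n x C i t) = fmax n x C t} ↔ j' ∈ S := by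
            constructor
            · intro hmem
              obtain ⟨i0, hi0S, hi0⟩ := Finset.exists_mem_eq_sup' hS (fun i => fj n x C i t)
              have : fj n x C i0 t = fmax n x C t := by rw [← hi0]; exact hmem.out
              by_contra hne
              have hii : i0 ≠ j' := fun h => hne (h ▸ hi0S)
              exact (ht i0 j' hii) (by rw [this, hj'])
            · intro hmem
              have h1 : S.sup' hS (fun i => fj n x C i t) ≤ fmax n x C t :=
                Finset.sup'_le _ _ fun i _ => fj_le_fmax
              have h2 : fmax n x C t ≤ S.sup' hS (fun i => fj n x C i t) := by
                rw [← hj']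
                exact Finset.le_sup' (fun i => fj n x C i t) hmem
              exact le_antisymm h1 h2
          by_cases hmem : j' ∈ S
          · rw [if_pos hmem, Set.indicator_of_mem (hAS.mpr hmem)]
          · rw [if_neg hmem, Set.indicator_of_notMem (fun h => hmem (hAS.mp h))]
    _ = ∫ t in {t : ℝ | S.sup' hS (fun i => fj n x C i t) = fmax n x C t}, fmax n x C t := by
        rw [integral_indicator (measurableSet_AS S hS)]

end sumformula

section uniqueness
variable {n : ℕ} {x : Fin n → ℝ}

lemma uniq_aux [Nonempty (Fin n)] (hx : StrictMono x) (C C' : Fin n → ℝ)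
    (hF : ∀ j, Fj n x C j = Fj n x C' j) (hpos : ∀ j, 0 < Fj n x C j)
    {M : ℝ} (hM : 0 < M) (hMle : ∀ j, C' j - C j ≤ M) (hex : ∃ j, C' j - C j = M) :
    False := by
  set S : Finset (Fin n) := Finset.univ.filter (fun j => C' j - C j = M) with hSdef
  have hS : S.Nonempty := by
    obtain ⟨j, hj⟩ := hex
    exact ⟨j, by simp [hSdef, hj]⟩
  set A : Set ℝ := {t : ℝ | S.sup' hS (fun i => fj n x C i t) = fmax n x C t} with hAdef
  set A' : Set ℝ := {t : ℝ | S.sup' hS (fun i => fj n x C' i t) = fmax n x C' t} with hA'def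
  -- key pointwise facts on A
  have key : ∀ t ∈ A, fmax n x C' t = fmax n x C t + M ∧ t ∈ A' := by
    intro t htA
    obtain ⟨i0, hi0S, hi0⟩ := Finset.exists_mem_eq_sup' hS (fun i => fj n x C i t)
    have hi0M : C' i0 - C i0 = M := (Finset.mem_filter.mp hi0S).2
    have hfi0 : fj n x C i0 t = fmax n x C t := by rw [← hi0]; exact htA.out
    have hfi0' : fj n x C' i0 t = fmax n x C t + M := by
      simp only [fj] at hfi0 ⊢; linarith
    have hle : fmax n x C' t ≤ fmax n x C t + M :=
      fmax_le_fmax_add hM.le (fun j => by linarith [hMle j])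
    have hge : fmax n x C t + M ≤ fmax n x C' t := by
      rw [← hfi0']; exact fj_le_fmax
    have heq : fmax n x C' t = fmax n x C t + M := le_antisymm hle hge
    refine ⟨heq, ?_⟩
    have h1 : S.sup' hS (fun i => fj n x C' i t) ≤ fmax n x C' t :=
      Finset.sup'_le _ _ fun i _ => fj_le_fmax
    have h2 : fmax n x C' t ≤ S.sup' hS (fun i => fj n x C' i t) := by
      rw [heq, ← hfi0']
      exact Finset.le_sup' (fun i => fj n x C' i t) hi0S
    exact le_antisymm h1 h2
  have hsub : A ⊆ A' := fun t ht => (key t ht).2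
  -- positivity of the total mass on S
  have hsum : ∑ j ∈ S, Fj n x C j = ∫ t in A, fmax n x C t := sum_Fj_eq hx S hS
  have hsumpos : 0 < ∑ j ∈ S, Fj n x C j := Finset.sum_pos (fun j _ => hpos j) hS
  -- A has positive finite measure
  have hA0 : volume A ≠ 0 := by
    intro h0
    rw [hsum, Measure.restrict_eq_zero.mpr h0, integral_zero_measure] at hsumpos
    exact lt_irrefl _ hsumpos
  have hAtop : volume A ≠ ⊤ := by
    have hsub2 : A ⊆ ⋃ i : Fin n, Metric.closedBall (x i) (Real.sqrt (max (C i) 0)) := by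
      intro t ht
      by_contra hnot
      have h0 : fmax n x C t = 0 := fmax_eq_zero_outside hnot
      obtain ⟨i0, hi0S, hi0⟩ := Finset.exists_mem_eq_sup' hS (fun i => fj n x C i t)
      have hfi0 : fj n x C i0 t = 0 := by rw [← hi0, ht.out, h0]
      simp only [Set.mem_iUnion, Metric.mem_closedBall, Real.dist_eq, not_exists, not_le] at hnot
      have h2 : (t - x i0) ^ 2 ≤ max (C i0) 0 := by
        simp only [fj, sub_eq_zero] at hfi0
        rw [← hfi0]; exact le_max_left _ _
      have h4 : |t - x i0| ≤ Real.sqrt (max (C i0) 0) := by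
        rw [← Real.sqrt_sq_eq_abs]; exact Real.sqrt_le_sqrt h2
      exact absurd h4 (not_le.mpr (hnot i0))
    refine ne_top_of_le_ne_top ?_ (measure_mono hsub2)
    refine ne_of_lt (lt_of_le_of_lt (measure_iUnion_le _) ?_)
    rw [tsum_fintype]
    exact ENNReal.sum_lt_top.mpr fun i _ => measure_closedBall_lt_top
  have hApos : 0 < (volume A).toReal := ENNReal.toReal_pos hA0 hAtop
  -- the contradiction chain
  have hAmeas : MeasurableSet A := measurableSet_AS S hS
  have step1 : ∑ j ∈ S, Fj n x C' j = ∫ t in A', fmax n x C' t := sum_Fj_eq hx S hS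
  have step2 : ∫ t in A, fmax n x C' t ≤ ∫ t in A', fmax n x C' t := by
    refine setIntegral_mono_set (integrable_fmax.integrableOn) ?_ (HasSubset.Subset.eventuallyLE hsub)
    exact Filter.Eventually.of_forall fun t => fmax_nonneg
  have step3 : ∫ t in A, fmax n x C' t = (∫ t in A, fmax n x C t) + M * (volume A).toReal := by
    have h1 : ∫ t in A, fmax n x C' t = ∫ t in A, (fmax n x C t + M) := by
      refine setIntegral_congr_fun hAmeas fun t ht => (key t ht).1
    rw [h1, integral_add (integrable_fmax.integrableOn) (integrableOn_const
      hAtop), setIntegral_const]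
    simp [mul_comm, Measure.real]
  have hFsum : ∑ j ∈ S, Fj n x C j = ∑ j ∈ S, Fj n x C' j :=
    Finset.sum_congr rfl fun j _ => hF j
  have : (∫ t in A, fmax n x C t) + M * (volume A).toReal ≤ ∫ t in A, fmax n x C t := by
    calc (∫ t in A, fmax n x C t) + M * (volume A).toReal
        = ∫ t in A, fmax n x C' t := step3.symm
      _ ≤ ∫ t in A', fmax n x C' t := step2
      _ = ∑ j ∈ S, Fj n x C' j := step1.symm
      _ = ∑ j ∈ S, Fj n x C j := hFsum.symm
      _ = ∫ t in A, fmax n x C t := hsum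
  nlinarith [mul_pos hM hApos]

end uniqueness

section derivative
variable {n : ℕ} {x : Fin n → ℝ}

noncomputable def psi (n : ℕ) (x C : Fin n → ℝ) : ℝ := ∫ t, (fmax n x C t) ^ 2 / 2

lemma abs_fmax_update_sub [Nonempty (Fin n)] {C : Fin n → ℝ} {j : Fin n} {t s s' : ℝ} :
    |fmax n x (Function.update C j s) t - fmax n x (Function.update C j s') t| ≤ |s - s'| := by
  rw [abs_sub_le_iff]
  constructor
  · have := fmax_le_fmax_add (n := n) (x := x) (C := Function.update C j s')
      (C' := Function.update C j s) (t := t) (δ := |s - s'|) (abs_nonneg _) (fun i => by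
        by_cases hij : i = j
        · subst hij; simp only [Function.update_self]
          linarith [le_abs_self (s - s')]
        · simp [Function.update_of_ne hij, abs_nonneg (s - s')])
    linarith
  · have := fmax_le_fmax_add (n := n) (x := x) (C := Function.update C j s)
      (C' := Function.update C j s') (t := t) (δ := |s - s'|) (abs_nonneg _) (fun i => by
        by_cases hij : i = j
        · subst hij; simp only [Function.update_self]
          linarith [neg_abs_le (s - s')]
        · simp [Function.update_of_ne hij, abs_nonneg (s - s')])
    linarith

lemma hasDerivAt_psi [Nonempty (Fin n)] (hx : StrictMono x) (C : Fin n → ℝ) (j : Fin n) :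
    HasDerivAt (fun s => psi n x (Function.update C j s))
      (∫ t, (Ej n x C j).indicator (fmax n x C) t) (C j) := by
  set bound : ℝ → ℝ := fmax n x (fun i => C i + 1) with hbdef
  have hb0 : ∀ t, 0 ≤ bound t := fun t => fmax_nonneg
  have hbd : ∀ s t, s ∈ Metric.ball (C j) 1 → fmax n x (Function.update C j s) t ≤ bound t := by
    intro s t hs
    refine fmax_mono fun i => ?_
    by_cases hij : i = j
    · rw [hij]; simp only [Function.update_self]
      have h5 := Metric.mem_ball.mp hs
      rw [Real.dist_eq] at h5
      linarith [le_abs_self (s - C j)]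
    · simp [Function.update_of_ne hij]
  have key := hasDerivAt_integral_of_dominated_loc_of_lip
    (F := fun s t => (fmax n x (Function.update C j s) t) ^ 2 / 2)
    (F' := (Ej n x C j).indicator (fmax n x C))
    (x₀ := C j) (s := Metric.ball (C j) 1) (bound := bound) (μ := volume)
    (Metric.ball_mem_nhds _ one_pos)
    (Filter.Eventually.of_forall fun s =>
      (((continuous_fmax (C := Function.update C j s)).pow 2).div_const 2).aestronglyMeasurable)
    (by simpa only [Function.update_eq_self] using
      integrable_fmax_sq (n := n) (x := x) (C := C))
    ((integrable_fmax.indicator measurableSet_Ej).aestronglyMeasurable)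
    (Filter.Eventually.of_forall fun t => ?_)
    integrable_fmax
    (?_)
  · have h1 : (fun s => ∫ t, (fmax n x (Function.update C j s) t) ^ 2 / 2)
        = fun s => psi n x (Function.update C j s) := rfl
    rw [← h1]
    exact key.2
  -- Lipschitz estimate
  · refine LipschitzOnWith.of_dist_le_mul fun s hs s' hs' => ?_
    set u := fmax n x (Function.update C j s) t
    set v := fmax n x (Function.update C j s') t
    have hu0 : 0 ≤ u := fmax_nonneg
    have hv0 : 0 ≤ v := fmax_nonneg
    have hub : u ≤ bound t := hbd s t hs
    have hvb : v ≤ bound t := hbd s' t hs'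
    have huv : |u - v| ≤ |s - s'| := abs_fmax_update_sub
    rw [Real.dist_eq, Real.dist_eq]
    have h1 : u ^ 2 / 2 - v ^ 2 / 2 = (u + v) / 2 * (u - v) := by ring
    rw [h1, abs_mul]
    have h2 : |(u + v) / 2| ≤ bound t := by
      rw [abs_of_nonneg (by linarith)]; linarith
    have h3 : (Real.nnabs (bound t) : ℝ) = bound t := by
      simp [Real.coe_nnabs, abs_of_nonneg (hb0 t)]
    rw [h3]
    exact mul_le_mul h2 huv (abs_nonneg _) (hb0 t)
  -- a.e. differentiability
  · have hnull : volume ((⋃ i : Fin n, ⋃ k : Fin n,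
        {t : ℝ | i ≠ k ∧ fj n x C i t = fj n x C k t}) ∪ {t : ℝ | fj n x C j t = 0}) = 0 :=
      measure_union_null (ties_null hx) zero_null
    filter_upwards [(measure_eq_zero_iff_ae_notMem).mp hnull] with t ht
    simp only [Set.mem_union, Set.mem_iUnion, Set.mem_setOf_eq, not_or, not_exists, not_and] at ht
    obtain ⟨ht1, ht2⟩ := ht
    rcases lt_or_eq_of_le (fj_le_fmax (n := n) (x := x) (C := C) (t := t) (j := j)) with hlt | heq
    -- case 1: j is not maximal at t : locally constant
    · have hnotmem : t ∉ Ej n x C j := ne_of_lt hlt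
      rw [Set.indicator_of_notMem hnotmem]
      set δ := fmax n x C t - fj n x C j t with hδdef
      have hδ : 0 < δ := by simp only [hδdef]; linarith
      have hloc : ∀ s, |s - C j| < δ → fmax n x (Function.update C j s) t = fmax n x C t := by
        intro s hs
        rcases le_or_gt (C j) s with hcs | hcs
        · have hL := fmax_update_eq (n := n) (x := x) (C := C) (j := j) (t := t) hcs
          rw [Function.update_eq_self] at hL
          rw [hL, max_eq_right]
          have h6 : s - (t - x j) ^ 2 = fj n x C j t + (s - C j) := by
            simp only [fj]; ring
          rw [h6]
          simp only [hδdef] at hδ hs ⊢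
          linarith [le_abs_self (s - C j), abs_lt.mp hs]
        · have hL := fmax_update_eq (n := n) (x := x) (C := C) (j := j) (t := t) (s := C j) (s' := s) hcs.le
          rw [Function.update_eq_self] at hL
          have hC : C j - (t - x j) ^ 2 = fj n x C j t := by simp [fj]
          rw [hC] at hL
          rcases max_cases (fj n x C j t) (fmax n x (Function.update C j s) t) with ⟨h1, h2⟩ | ⟨h1, h2⟩
          · exfalso; rw [h1] at hL; linarith
          · rw [h1] at hL; exact hL.symm
      have hev : (fun s => (fmax n x (Function.update C j s) t) ^ 2 / 2)
          =ᶠ[nhds (C j)] fun _ => (fmax n x C t) ^ 2 / 2 := by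
        rw [Filter.eventuallyEq_iff_exists_mem]
        refine ⟨Metric.ball (C j) δ, Metric.ball_mem_nhds _ hδ, fun s hs => ?_⟩
        have h7 := hloc s (by rw [← Real.dist_eq]; exact hs)
        simp only [h7]
      exact (hasDerivAt_const (C j) _).congr_of_eventuallyEq hev
    -- case 2: j is strictly maximal at t : locally a parabola
    · have hmem : t ∈ Ej n x C j := heq
      rw [Set.indicator_of_mem hmem]
      have hpos : 0 < fj n x C j t :=
        lt_of_le_of_ne (heq ▸ fmax_nonneg) (Ne.symm ht2)
      set d := 2 * fj n x C j t with hddef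
      have hd : 0 < d := by positivity
      set M₀ := fmax n x (Function.update C j (C j - d)) t with hM₀def
      have hM₀lt : M₀ < fj n x C j t := by
        rcases exists_fmax_eq (x := x) (Function.update C j (C j - d)) t with h0 | ⟨i, hi⟩
        · rw [hM₀def, h0]; exact hpos
        · by_cases hij : i = j
          · subst hij
            rw [hM₀def, hi]
            simp only [fj, Function.update_self]
            simp only [fj] at hpos
            linarith
          · have hfi : fj n x (Function.update C j (C j - d)) i t = fj n x C i t := by
              simp [fj, Function.update_of_ne hij]
            rw [hM₀def, hi, hfi]
            have hle : fj n x C i t ≤ fmax n x C t := fj_le_fmax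
            rw [← heq] at hle
            exact lt_of_le_of_ne hle (ht1 i j hij)
      set δ := min (fj n x C j t - M₀) d with hδdef
      have hδ : 0 < δ := lt_min (by linarith) hd
      have hloc : ∀ s, |s - C j| < δ →
          fmax n x (Function.update C j s) t = s - (t - x j) ^ 2 := by
        intro s hs
        have h1 : C j - d ≤ s := by
          have := abs_lt.mp hs
          have := min_le_right (fj n x C j t - M₀) d
          simp only [hδdef] at hs
          linarith [(abs_lt.mp hs).1, min_le_right (fj n x C j t - M₀) d]
        have hL := fmax_update_eq (n := n) (x := x) (C := C) (j := j) (t := t) h1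
        rw [hL, ← hM₀def, max_eq_left]
        have h2 : s - (t - x j) ^ 2 = fj n x C j t + (s - C j) := by
          simp only [fj]; ring
        rw [h2]
        linarith [(abs_lt.mp hs).1, min_le_left (fj n x C j t - M₀) d]
      have hder : HasDerivAt (fun s => (s - (t - x j) ^ 2) ^ 2 / 2)
          (fmax n x C t) (C j) := by
        have h0 : HasDerivAt (fun s : ℝ => (s - (t - x j) ^ 2) ^ 2 / 2)
            (2 * (C j - (t - x j) ^ 2) ^ 1 * 1 / 2) (C j) :=
          (((hasDerivAt_id (C j)).sub_const ((t - x j) ^ 2)).pow 2).div_const 2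
        convert h0 using 1
        rw [← heq]
        simp only [fj]; ring
      refine hder.congr_of_eventuallyEq ?_
      rw [Filter.eventuallyEq_iff_exists_mem]
      refine ⟨Metric.ball (C j) δ, Metric.ball_mem_nhds _ hδ, fun s hs => ?_⟩
      have h7 := hloc s (by rw [← Real.dist_eq]; exact hs)
      simp only [h7]

end derivative

section existence
variable {n : ℕ} {x : Fin n → ℝ}

lemma psi_nonneg (C : Fin n → ℝ) : 0 ≤ psi n x C :=
  integral_nonneg fun t => by positivity

lemma psi_lower [Nonempty (Fin n)] (C : Fin n → ℝ) (j : Fin n) :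
    max (C j - 1) 0 ^ 2 / 2 ≤ psi n x C := by
  set m := max (C j - 1) 0 with hm
  have hm0 : 0 ≤ m := le_max_right _ _
  have h1 : ∫ t in Set.Icc (x j) (x j + 1), (fmax n x C t) ^ 2 / 2 ≤ psi n x C :=
    setIntegral_le_integral integrable_fmax_sq
      (Filter.Eventually.of_forall fun t => by positivity)
  have h2 : ∫ t in Set.Icc (x j) (x j + 1), (m ^ 2 / 2 : ℝ)
      ≤ ∫ t in Set.Icc (x j) (x j + 1), (fmax n x C t) ^ 2 / 2 := by
    refine setIntegral_mono_on (integrableOn_const ?_)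
      (integrable_fmax_sq.integrableOn) measurableSet_Icc ?_
    · rw [Real.volume_Icc]; exact ENNReal.ofReal_ne_top
    · intro t ht
      have hmle : m ≤ fmax n x C t := by
        refine max_le ?_ fmax_nonneg
        have hsq : (t - x j) ^ 2 ≤ 1 := by
          obtain ⟨hta, htb⟩ := ht
          nlinarith
        have : C j - 1 ≤ fj n x C j t := by simp only [fj]; linarith
        exact le_trans this fj_le_fmax
      have := pow_le_pow_left₀ hm0 hmle 2
      linarith
  have h3 : ∫ t in Set.Icc (x j) (x j + 1), (m ^ 2 / 2 : ℝ) = m ^ 2 / 2 := by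
    rw [setIntegral_const, Real.volume_real_Icc]
    norm_num
  linarith [h1, h2, h3.symm.le]

lemma psi_continuous [Nonempty (Fin n)] : Continuous (fun C => psi n x C) := by
  rw [continuous_iff_continuousAt]
  intro C₀
  set L : ℝ := ∫ t, fmax n x (fun i => C₀ i + 1) t with hL
  have hL0 : 0 ≤ L := integral_nonneg fun t => fmax_nonneg
  have hkey : ∀ C : Fin n → ℝ, dist C C₀ ≤ 1 →
      |psi n x C - psi n x C₀| ≤ L * dist C C₀ := by
    intro C hC
    have hd0 : 0 ≤ dist C C₀ := dist_nonneg
    have hcoord : ∀ i, |C i - C₀ i| ≤ dist C C₀ := by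
      intro i
      have := dist_le_pi_dist C C₀ i
      rwa [Real.dist_eq] at this
    have hub : ∀ t, fmax n x C t ≤ fmax n x (fun i => C₀ i + 1) t := fun t =>
      fmax_mono fun i => by linarith [abs_le.mp (hcoord i) |>.2, hC]
    have hub0 : ∀ t, fmax n x C₀ t ≤ fmax n x (fun i => C₀ i + 1) t := fun t =>
      fmax_mono fun i => by linarith
    have hlip : ∀ t, |fmax n x C t - fmax n x C₀ t| ≤ dist C C₀ := by
      intro t
      rw [abs_sub_le_iff]
      constructor
      · have := fmax_le_fmax_add (n := n) (x := x) (C := C₀) (C' := C) (t := t) hd0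
          (fun i => by linarith [abs_le.mp (hcoord i) |>.2])
        linarith
      · have := fmax_le_fmax_add (n := n) (x := x) (C := C) (C' := C₀) (t := t) hd0
          (fun i => by linarith [abs_le.mp (hcoord i) |>.1])
        linarith
    have hsub : psi n x C - psi n x C₀
        = ∫ t, ((fmax n x C t) ^ 2 / 2 - (fmax n x C₀ t) ^ 2 / 2) := by
      rw [integral_sub integrable_fmax_sq integrable_fmax_sq]
      rfl
    rw [hsub]
    have habs := norm_integral_le_integral_norm
      (fun t => (fmax n x C t) ^ 2 / 2 - (fmax n x C₀ t) ^ 2 / 2) (μ := volume)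
    rw [Real.norm_eq_abs] at habs
    refine le_trans habs ?_
    have hmono : ∫ t, ‖(fmax n x C t) ^ 2 / 2 - (fmax n x C₀ t) ^ 2 / 2‖
        ≤ ∫ t, fmax n x (fun i => C₀ i + 1) t * dist C C₀ := by
      refine integral_mono (integrable_fmax_sq.sub integrable_fmax_sq).norm
        (integrable_fmax.mul_const _) ?_
      intro t
      simp only [Real.norm_eq_abs]
      set u := fmax n x C t
      set v := fmax n x C₀ t
      have hu0 : 0 ≤ u := fmax_nonneg
      have hv0 : 0 ≤ v := fmax_nonneg
      have h1 : u ^ 2 / 2 - v ^ 2 / 2 = (u + v) / 2 * (u - v) := by ring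
      rw [h1, abs_mul]
      have h2 : |(u + v) / 2| ≤ fmax n x (fun i => C₀ i + 1) t := by
        rw [abs_of_nonneg (by linarith)]
        have := hub t; have := hub0 t
        linarith
      exact mul_le_mul h2 (hlip t) (abs_nonneg _)
        (le_trans hv0 (hub0 t))
    rw [integral_mul_const] at hmono
    exact hmono
  rw [Metric.continuousAt_iff]
  intro ε hε
  refine ⟨min 1 (ε / (L + 1)), lt_min one_pos (by positivity), fun {C} hC => ?_⟩
  have h1 : dist C C₀ ≤ 1 := le_trans hC.le (min_le_left _ _)
  have h2 : dist C C₀ < ε / (L + 1) := lt_of_lt_of_le hC (min_le_right _ _)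
  have h3 := hkey C h1
  rw [Real.dist_eq]
  calc |psi n x C - psi n x C₀| ≤ L * dist C C₀ := h3
    _ < ε := by
      have : L * dist C C₀ ≤ L * (ε / (L + 1)) := by
        apply mul_le_mul_of_nonneg_left h2.le hL0
      have hfrac : L * (ε / (L + 1)) < ε := by
        rw [mul_div_assoc'] at *
        rw [div_lt_iff₀ (by linarith : (0:ℝ) < L + 1)]
        nlinarith
      linarith

lemma sum_bound [Nonempty (Fin n)] (hn0 : 0 < n) (a C : Fin n → ℝ) (ha : ∀ i, 0 < a i)
    (T : Finset (Fin n)) :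
    ∑ i ∈ T, a i * C i
      ≤ (∑ i, a i) + (n : ℝ) * (∑ i, (a i) ^ 2) + psi n x C / 2 := by
  have hn' : (0 : ℝ) < n := by exact_mod_cast hn0
  have hper : ∀ i, a i * C i ≤ a i + (n : ℝ) * (a i) ^ 2
      + (max (C i - 1) 0) ^ 2 / (4 * n) := by
    intro i
    set m := max (C i - 1) 0 with hm
    have hm0 : 0 ≤ m := le_max_right _ _
    have hCi : C i ≤ 1 + m := by
      have := le_max_left (C i - 1) 0
      linarith
    have hamg : a i * m ≤ (n : ℝ) * (a i) ^ 2 + m ^ 2 / (4 * n) := by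
      have hsq := sq_nonneg (2 * (n : ℝ) * a i - m)
      have h4n : (0 : ℝ) < 4 * n := by positivity
      rw [← sub_nonneg]
      have hkey : (n : ℝ) * a i ^ 2 + m ^ 2 / (4 * n) - a i * m
          = ((2 * (n : ℝ) * a i - m) ^ 2) / (4 * n) := by
        field_simp
        ring
      rw [hkey]
      positivity
    nlinarith [ha i, mul_le_mul_of_nonneg_left hCi (ha i).le]
  calc ∑ i ∈ T, a i * C i
      ≤ ∑ i ∈ T, (a i + (n : ℝ) * (a i) ^ 2 + (max (C i - 1) 0) ^ 2 / (4 * n)) :=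
        Finset.sum_le_sum fun i _ => hper i
    _ ≤ ∑ i, (a i + (n : ℝ) * (a i) ^ 2 + (max (C i - 1) 0) ^ 2 / (4 * n)) := by
        refine Finset.sum_le_sum_of_subset_of_nonneg (Finset.subset_univ T) ?_
        intro i _ _
        have := ha i
        positivity
    _ = (∑ i, a i) + (n : ℝ) * (∑ i, (a i) ^ 2)
          + ∑ i, (max (C i - 1) 0) ^ 2 / (4 * n) := by
        rw [Finset.sum_add_distrib, Finset.sum_add_distrib, Finset.mul_sum]
    _ ≤ (∑ i, a i) + (n : ℝ) * (∑ i, (a i) ^ 2) + psi n x C / 2 := by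
        have hterm : ∀ i : Fin n, (max (C i - 1) 0) ^ 2 / (4 * n) ≤ psi n x C / (2 * n) := by
          intro i
          have := psi_lower (x := x) C i
          rw [div_le_div_iff₀ (by positivity) (by positivity)]
          nlinarith [sq_nonneg (max (C i - 1) 0)]
        have hsum := Finset.sum_le_sum fun i (_ : i ∈ Finset.univ) => hterm i
        rw [Finset.sum_const, Finset.card_univ, Fintype.card_fin, nsmul_eq_mul] at hsum
        have h2 : (n : ℝ) * (psi n x C / (2 * n)) = psi n x C / 2 := by
          field_simp
        rw [h2] at hsum
        linarith

end existence

section final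
variable {n : ℕ} {x : Fin n → ℝ}

lemma uniq [Nonempty (Fin n)] (hx : StrictMono x) (C C' : Fin n → ℝ)
    (h1 : ∀ j, 0 < Fj n x C j) (h2 : ∀ j, Fj n x C j = Fj n x C' j) : C = C' := by
  by_contra hne
  have hex : ∃ j, C j ≠ C' j := by
    by_contra h; push_neg at h; exact hne (funext h)
  obtain ⟨j0, hj0⟩ := hex
  set M := Finset.univ.sup' Finset.univ_nonempty (fun j => C' j - C j) with hM
  rcases lt_or_ge 0 M with hpos | hle
  · refine uniq_aux hx C C' h2 h1 hpos
      (fun j => Finset.le_sup' (fun j => C' j - C j) (Finset.mem_univ j)) ?_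
    obtain ⟨i, _, hi⟩ := Finset.exists_mem_eq_sup' (Finset.univ_nonempty (α := Fin n))
      (fun j => C' j - C j)
    exact ⟨i, hi.symm⟩
  · have hall : ∀ j, C' j ≤ C j := fun j => by
      have := le_trans (Finset.le_sup' (fun j => C' j - C j) (Finset.mem_univ j)) hle
      linarith
    set M' := Finset.univ.sup' Finset.univ_nonempty (fun j => C j - C' j) with hM'
    have hM'pos : 0 < M' := by
      have hlt : 0 < C j0 - C' j0 := by
        have h := hall j0
        rcases lt_or_eq_of_le h with h' | h'
        · linarith
        · exact absurd h'.symm hj0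
      exact lt_of_lt_of_le hlt (Finset.le_sup' (fun j => C j - C' j) (Finset.mem_univ j0))
    have h1' : ∀ j, 0 < Fj n x C' j := fun j => (h2 j) ▸ h1 j
    have h2' : ∀ j, Fj n x C' j = Fj n x C j := fun j => (h2 j).symm
    refine uniq_aux hx C' C h2' h1' hM'pos
      (fun j => Finset.le_sup' (fun j => C j - C' j) (Finset.mem_univ j)) ?_
    obtain ⟨i, _, hi⟩ := Finset.exists_mem_eq_sup' (Finset.univ_nonempty (α := Fin n))
      (fun j => C j - C' j)
    exact ⟨i, hi.symm⟩

end final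


/-- For every vector `a` with all positive components there is a unique `C`
with `F(C) = a`. -/
theorem stmt_0 (n : ℕ) (hn : 1 ≤ n) (x : Fin n → ℝ) (hx : StrictMono x)
    (a : Fin n → ℝ) (ha : ∀ j, 0 < a j) :
    ∃! C : Fin n → ℝ, Fvec n x C = a := by
  haveI : Nonempty (Fin n) := Fin.pos_iff_nonempty.mp hn
  set G : (Fin n → ℝ) → ℝ := fun C => psi n x C - ∑ i, a i * C i with hG
  have hGcont : Continuous G := by
    apply Continuous.sub psi_continuous
    exact continuous_finset_sum _ fun i _ => continuous_const.mul (continuous_apply i)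
  -- coordinatewise derivative of G
  have hGderiv : ∀ (C : Fin n → ℝ) (j : Fin n),
      HasDerivAt (fun s => G (Function.update C j s)) (Fj n x C j - a j) (C j) := by
    intro C j
    have hsumEq : ∀ s : ℝ, ∑ i, a i * Function.update C j s i
        = a j * s + ∑ i ∈ Finset.univ.erase j, a i * C i := by
      intro s
      rw [← Finset.add_sum_erase _ _ (Finset.mem_univ j)]
      simp only [Function.update_self]
      congr 1
      refine Finset.sum_congr rfl fun i hi => ?_
      rw [Function.update_of_ne (Finset.mem_erase.mp hi).1]
    have hval : (∫ t, (Ej n x C j).indicator (fmax n x C) t) = Fj n x C j := by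
      rw [integral_indicator measurableSet_Ej, ← Fj_eq_integral]
    have hpsi := hasDerivAt_psi hx C j
    rw [hval] at hpsi
    have hlin : HasDerivAt (fun s : ℝ => a j * s + ∑ i ∈ Finset.univ.erase j, a i * C i)
        (a j) (C j) := by
      simpa using ((hasDerivAt_id (C j)).const_mul (a j)).add_const
        (∑ i ∈ Finset.univ.erase j, a i * C i)
    have h2 := hpsi.sub hlin
    refine h2.congr_of_eventuallyEq (Filter.EventuallyEq.of_eq (funext fun s => ?_))
    simp only [hG]
    rw [hsumEq s]
    rfl
  -- coercivity constants
  set A1 : ℝ := ∑ i, a i with hA1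
  set A2 : ℝ := (n : ℝ) * ∑ i, (a i) ^ 2 with hA2
  set K1 : ℝ := A1 + A2 with hK1
  set B : ℝ := G 0 with hB
  set apos : ℝ := Finset.univ.inf' Finset.univ_nonempty a with hapos
  have hapos0 : 0 < apos := by
    rw [hapos, Finset.lt_inf'_iff]
    exact fun i _ => ha i
  have haposle : ∀ i, apos ≤ a i := fun i => Finset.inf'_le _ (Finset.mem_univ i)
  set R : ℝ := max (2 * (|B| + |K1| + 1) + 2) ((|B| + |K1| + 1) / apos) with hR
  have hR2 : 2 * (|B| + |K1| + 1) + 2 ≤ R := le_max_left _ _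
  have hR0 : 0 < R := by
    have : (0:ℝ) < 2 * (|B| + |K1| + 1) + 2 := by positivity
    linarith
  have hRapos : |B| + |K1| + 1 ≤ apos * R := by
    have h1 : (|B| + |K1| + 1) / apos ≤ R := le_max_right _ _
    rw [div_le_iff₀ hapos0] at h1
    linarith [h1]
  -- everything outside the ball of radius R is strictly above B = G 0
  have hout : ∀ C : Fin n → ℝ, R < ‖C‖ → B < G C := by
    intro C hC
    have hexi : ∃ i, R < |C i| := by
      by_contra h
      push_neg at h
      have : ‖C‖ ≤ R := by
        refine (pi_norm_le_iff_of_nonneg hR0.le).mpr fun i => ?_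
        rw [Real.norm_eq_abs]
        exact h i
      linarith
    obtain ⟨i, hi⟩ := hexi
    have hψ0 : 0 ≤ psi n x C := psi_nonneg C
    rcases le_or_gt (C i) 0 with hneg | hposci
    · -- the big coordinate is very negative
      have hCi : C i < -R := by
        rcases abs_cases (C i) with ⟨h1, _⟩ | ⟨h1, _⟩
        · rw [h1] at hi; linarith
        · rw [h1] at hi; linarith
      have hsb := sum_bound (x := x) hn a C ha (Finset.univ.erase i)
      have hsplit : ∑ j, a j * C j = a i * C i + ∑ j ∈ Finset.univ.erase i, a j * C j :=
        (Finset.add_sum_erase _ _ (Finset.mem_univ i)).symm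
      have hterm : a i * C i ≤ apos * C i := by
        have := haposle i
        nlinarith [hapos0]
      have haC : apos * C i ≤ apos * (-R) := by
        apply mul_le_mul_of_nonneg_left (by linarith) hapos0.le
      have hGC : G C = psi n x C - ∑ j, a j * C j := rfl
      rw [hGC, hsplit]
      have hb : B ≤ |B| := le_abs_self B
      have hk : K1 ≤ |K1| := le_abs_self K1
      nlinarith [hsb, hterm, haC]
    · -- the big coordinate is very positive
      have hCi : R < C i := by
        rcases abs_cases (C i) with ⟨h1, _⟩ | ⟨h1, _⟩
        · rw [h1] at hi; exact hi
        · rw [h1] at hi; linarith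
      have hψ := psi_lower (x := x) C i
      have hm : 2 * (|B| + |K1| + 1) + 1 ≤ max (C i - 1) 0 := by
        have h1 : 2 * (|B| + |K1| + 1) + 1 ≤ C i - 1 := by linarith
        exact le_trans h1 (le_max_left _ _)
      have hsb := sum_bound (x := x) hn a C ha Finset.univ
      have hGC : G C = psi n x C - ∑ j, a j * C j := rfl
      rw [hGC]
      have hb : B ≤ |B| := le_abs_self B
      have hk : K1 ≤ |K1| := le_abs_self K1
      have hBK : (0:ℝ) ≤ |B| + |K1| := by positivity
      nlinarith [hψ, hsb, hm, sq_nonneg (max (C i - 1) 0)]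
  -- existence of a global minimizer
  obtain ⟨Cm, hCmB, hCmmin⟩ := (isCompact_closedBall (0 : Fin n → ℝ) R).exists_isMinOn
    ⟨0, Metric.mem_closedBall_self hR0.le⟩ hGcont.continuousOn
  have hmin : ∀ D, G Cm ≤ G D := by
    intro D
    rcases le_or_gt ‖D‖ R with h | h
    · exact hCmmin (by rwa [Metric.mem_closedBall, dist_zero_right])
    · have h0 : G Cm ≤ G 0 := hCmmin (Metric.mem_closedBall_self hR0.le)
      have hBD := hout D h
      have h0' : G Cm ≤ B := by rw [hB]; exact h0
      linarith
  -- the minimizer solves F(C) = a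
  have hFa : ∀ j, Fj n x Cm j = a j := by
    intro j
    have hloc : IsLocalMin (fun s => G (Function.update Cm j s)) (Cm j) := by
      apply Filter.Eventually.of_forall
      intro s
      simp only [Function.update_eq_self]
      exact hmin _
    have hzero := hloc.hasDerivAt_eq_zero (hGderiv Cm j)
    linarith [hzero]
  refine ⟨Cm, ?_, ?_⟩
  · funext j
    simp only [Fvec]
    exact hFa j
  · intro y hy
    have hyF : ∀ j, Fj n x y j = a j := fun j => congrFun hy j
    have h1 : ∀ j, 0 < Fj n x y j := fun j => (hyF j) ▸ ha j
    have h2 : ∀ j, Fj n x y j = Fj n x Cm j := fun j => by rw [hyF j, hFa j]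
    exact uniq hx y Cm h1 h2
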